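/- For n ≥ 2 and complex variables with |z| ≤ 1, |ξ| < 1, |η| < 1, the function (1 - ξz - η z̄ + ξη)^{1-n} admits a power series expansion ∑_{p,q≥0} R^n_{p,q}(z) ξ^p η^q, and the coefficients satisfy p! q! R^n_{p,q}(0) = (-1)^p δ_{pq} p! (n-1)n(n+1)⋯(n+p-2). -/

import Mathlib

open Finset

open Complex in
private lemma negBinom_hasSum (M : ℕ) {w : ℂ} (hw : ‖w‖ < 1) :
    HasSum (fun q : ℕ => ((M + q).choose q : ℂ) * w ^ q) (((1 - w) ^ (M + 1))⁻¹) := by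
  induction M with
  | zero => simpa using hasSum_geometric_of_norm_lt_one hw
  | succ M ih =>
    have hgeom := hasSum_geometric_of_norm_lt_one hw
    have hf' : Summable fun q : ℕ => ‖((M + q).choose q : ℂ) * w ^ q‖ :=
      summable_norm_iff.mpr ih.summable
    have hg' : Summable fun q : ℕ => ‖w ^ q‖ := summable_norm_iff.mpr hgeom.summable
    have hs : Summable fun q : ℕ =>
        ∑ kl ∈ antidiagonal q, (((M + kl.1).choose kl.1 : ℂ) * w ^ kl.1) * w ^ kl.2 :=
      (summable_norm_sum_mul_antidiagonal_of_summable_norm hf' hg').of_norm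
    have heq := tsum_mul_tsum_eq_tsum_sum_antidiagonal_of_summable_norm hf' hg'
    rw [ih.tsum_eq, hgeom.tsum_eq] at heq
    have hkey : ∀ q : ℕ,
        (∑ kl ∈ antidiagonal q, (((M + kl.1).choose kl.1 : ℂ) * w ^ kl.1) * w ^ kl.2)
          = ((M + 1 + q).choose q : ℂ) * w ^ q := by
      intro q
      rw [Finset.Nat.sum_antidiagonal_eq_sum_range_succ_mk]
      have h1 : ∀ k ∈ range (q + 1), (((M + k).choose k : ℂ) * w ^ k) * w ^ (q - k)
          = ((M + k).choose k : ℂ) * w ^ q := by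
        intro k hk
        rw [mem_range] at hk
        rw [mul_assoc, ← pow_add]
        congr 2
        omega
      rw [Finset.sum_congr rfl h1, ← Finset.sum_mul, ← Nat.cast_sum]
      congr 2
      calc ∑ k ∈ range (q + 1), (M + k).choose k
          = ∑ k ∈ range (q + 1), (k + M).choose M := by
            refine Finset.sum_congr rfl fun k _ => ?_
            rw [add_comm M k]; exact Nat.choose_symm_add
        _ = (q + M + 1).choose (M + 1) := Nat.sum_range_add_choose q M
        _ = (M + 1 + q).choose q := by
            rw [show q + M + 1 = M + 1 + q by omega]
            exact Nat.choose_symm_add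
    have heq2 : ((1 - w) ^ (M + 1))⁻¹ * (1 - w)⁻¹
        = ∑' q : ℕ, ((M + 1 + q).choose q : ℂ) * w ^ q := heq.trans (tsum_congr hkey)
    have hfun : (fun q : ℕ => ∑ kl ∈ antidiagonal q,
        (((M + kl.1).choose kl.1 : ℂ) * w ^ kl.1) * w ^ kl.2)
        = fun q : ℕ => ((M + 1 + q).choose q : ℂ) * w ^ q := funext hkey
    have H := hs.hasSum
    rw [hfun] at H
    rw [← heq2] at H
    have hval : ((1 - w) ^ (M + 1))⁻¹ * (1 - w)⁻¹ = ((1 - w) ^ (M + 1 + 1))⁻¹ := by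
      rw [pow_succ (1 - w) (M + 1), mul_inv]
    rwa [hval] at H

open Complex in
private lemma mobius {z ξ : ℂ} (hz : ‖z‖ ≤ 1) (hξ : ‖ξ‖ < 1) :
    ‖(starRingEnd ℂ) z - ξ‖ ≤ ‖1 - ξ * z‖ := by
  have key : normSq ((starRingEnd ℂ) z - ξ) + (1 - normSq ξ) * (1 - normSq z)
      = normSq (1 - ξ * z) := by
    simp only [normSq_apply, Complex.sub_re, Complex.sub_im, Complex.mul_re, Complex.mul_im,
      Complex.one_re, Complex.one_im, Complex.conj_re, Complex.conj_im]
    ring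
  have h1 : normSq ξ ≤ 1 := by
    rw [← Complex.sq_norm]
    have : ‖ξ‖ < 1 := hξ
    nlinarith [norm_nonneg ξ]
  have h2 : normSq z ≤ 1 := by
    rw [← Complex.sq_norm]
    have : ‖z‖ ≤ 1 := hz
    nlinarith [norm_nonneg z]
  have h3 : normSq ((starRingEnd ℂ) z - ξ) ≤ normSq (1 - ξ * z) := by nlinarith
  rw [Complex.norm_def, Complex.norm_def]
  exact Real.sqrt_le_sqrt h3

open Complex in
private lemma sub_pow_expand (x y : ℂ) (q : ℕ) :
    (x - y) ^ q = ∑ i ∈ range (q + 1), (-1) ^ i * (q.choose i : ℂ) * x ^ (q - i) * y ^ i := by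
  rw [sub_pow]
  conv_rhs => rw [← Finset.sum_range_reflect]
  refine Finset.sum_congr rfl fun j hj => ?_
  rw [mem_range] at hj
  simp only [show q + 1 - 1 - j = q - j from by omega]
  have h1 : q - (q - j) = j := by omega
  have h2 : q.choose (q - j) = q.choose j := Nat.choose_symm (by omega)
  have h3 : (-1 : ℂ) ^ (q - j) = (-1) ^ (j + q) := by
    rw [show j + q = (q - j) + 2 * j from by omega, pow_add, pow_mul]
    simp
  rw [h1, h2, h3]
  ring

open Complex in
private noncomputable def Rp (ν p q : ℕ) (z : ℂ) : ℂ :=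
  ((ν + q).choose q : ℂ) *
    ∑ i ∈ range (q + 1), if i ≤ p then
      ((-1) ^ i * (q.choose i : ℂ) * ((starRingEnd ℂ) z) ^ (q - i) *
        ((ν + q + (p - i)).choose (p - i) : ℂ) * z ^ (p - i)) else 0

open Complex in
private lemma hasSum_Rp (ν q : ℕ) {z ξ : ℂ} (hz : ‖z‖ ≤ 1) (hξ : ‖ξ‖ < 1) :
    HasSum (fun p => Rp ν p q z * ξ ^ p)
      (((ν + q).choose q : ℂ) * ((starRingEnd ℂ) z - ξ) ^ q
        * (((1 - ξ * z) ^ (ν + q + 1))⁻¹)) := by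
  have hξz : ‖ξ * z‖ < 1 := by
    rw [norm_mul]
    calc ‖ξ‖ * ‖z‖ ≤ ‖ξ‖ * 1 := by gcongr
      _ = ‖ξ‖ := mul_one _
      _ < 1 := hξ
  have hshift : ∀ i ∈ range (q + 1), HasSum
      (fun p => if i ≤ p then ((ν + q).choose q : ℂ) * ((-1) ^ i * (q.choose i : ℂ)
          * ((starRingEnd ℂ) z) ^ (q - i) * ((ν + q + (p - i)).choose (p - i) : ℂ)
          * z ^ (p - i)) * ξ ^ p else 0)
      (((ν + q).choose q : ℂ) * ((-1) ^ i * (q.choose i : ℂ)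
          * ((starRingEnd ℂ) z) ^ (q - i) * ξ ^ i) * (((1 - ξ * z) ^ (ν + q + 1))⁻¹)) := by
    intro i _
    have h0 := (negBinom_hasSum (ν + q) hξz).mul_left
      (((ν + q).choose q : ℂ) * ((-1) ^ i * (q.choose i : ℂ)
        * ((starRingEnd ℂ) z) ^ (q - i) * ξ ^ i))
    have hfun : (fun j => (((ν + q).choose q : ℂ) * ((-1) ^ i * (q.choose i : ℂ)
          * ((starRingEnd ℂ) z) ^ (q - i) * ξ ^ i)) * (((ν + q + j).choose j : ℂ) * (ξ * z) ^ j))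
        = fun j => ((ν + q).choose q : ℂ) * ((-1) ^ i * (q.choose i : ℂ)
          * ((starRingEnd ℂ) z) ^ (q - i) * ((ν + q + j).choose j : ℂ)
          * z ^ j) * ξ ^ (i + j) := by
      funext j
      rw [pow_add]
      ring
    rw [hfun] at h0
    rw [← Function.Injective.hasSum_iff (g := fun j => j + i) (add_left_injective i) ?_]
    · have hcomp : ((fun p => if i ≤ p then ((ν + q).choose q : ℂ) * ((-1) ^ i * (q.choose i : ℂ)
          * ((starRingEnd ℂ) z) ^ (q - i) * ((ν + q + (p - i)).choose (p - i) : ℂ)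
          * z ^ (p - i)) * ξ ^ p else 0) ∘ fun j => j + i)
          = fun j => ((ν + q).choose q : ℂ) * ((-1) ^ i * (q.choose i : ℂ)
          * ((starRingEnd ℂ) z) ^ (q - i) * ((ν + q + j).choose j : ℂ)
          * z ^ j) * ξ ^ (i + j) := by
        funext j
        simp only [Function.comp_apply]
        rw [if_pos (Nat.le_add_left i j), Nat.add_sub_cancel, add_comm j i]
      rw [hcomp]
      exact h0
    · intro x hx
      rw [if_neg]
      intro hc
      refine hx ⟨x - i, ?_⟩
      show x - i + i = x
      omega
  have hsum := hasSum_sum hshift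
  have hfun2 : (fun p => ∑ i ∈ range (q + 1), if i ≤ p then ((ν + q).choose q : ℂ)
        * ((-1) ^ i * (q.choose i : ℂ) * ((starRingEnd ℂ) z) ^ (q - i)
        * ((ν + q + (p - i)).choose (p - i) : ℂ) * z ^ (p - i)) * ξ ^ p else 0)
      = fun p => Rp ν p q z * ξ ^ p := by
    funext p
    simp only [Rp, Finset.mul_sum, Finset.sum_mul, mul_ite, ite_mul, mul_zero, zero_mul]
  have hval : ∑ i ∈ range (q + 1), ((ν + q).choose q : ℂ) * ((-1) ^ i * (q.choose i : ℂ)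
        * ((starRingEnd ℂ) z) ^ (q - i) * ξ ^ i) * (((1 - ξ * z) ^ (ν + q + 1))⁻¹)
      = ((ν + q).choose q : ℂ) * ((starRingEnd ℂ) z - ξ) ^ q
        * (((1 - ξ * z) ^ (ν + q + 1))⁻¹) := by
    rw [← Finset.sum_mul, ← Finset.mul_sum, ← sub_pow_expand]
  rw [hfun2, hval] at hsum
  exact hsum

open Complex in
private lemma hasSum_eta (ν : ℕ) {z ξ η : ℂ} (hz : ‖z‖ ≤ 1) (hξ : ‖ξ‖ < 1) (hη : ‖η‖ < 1) :
    HasSum (fun q => ((ν + q).choose q : ℂ) * ((starRingEnd ℂ) z - ξ) ^ q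
        * (((1 - ξ * z) ^ (ν + q + 1))⁻¹) * η ^ q)
      (((1 - ξ * z - η * (starRingEnd ℂ) z + ξ * η) ^ (ν + 1))⁻¹) := by
  have hξz : ‖ξ * z‖ < 1 := by
    rw [norm_mul]
    calc ‖ξ‖ * ‖z‖ ≤ ‖ξ‖ * 1 := by gcongr
      _ = ‖ξ‖ := mul_one _
      _ < 1 := hξ
  have hA : (1 - ξ * z) ≠ 0 := by
    intro h
    rw [sub_eq_zero] at h
    rw [← h] at hξz
    simp at hξz
  have hApos : 0 < ‖1 - ξ * z‖ := norm_pos_iff.mpr hA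
  set w : ℂ := η * ((starRingEnd ℂ) z - ξ) / (1 - ξ * z) with hw_def
  have hw : ‖w‖ < 1 := by
    rw [hw_def, norm_div, norm_mul, div_lt_one hApos]
    calc ‖η‖ * ‖(starRingEnd ℂ) z - ξ‖ ≤ ‖η‖ * ‖1 - ξ * z‖ := by
          gcongr
          exact mobius hz hξ
      _ < 1 * ‖1 - ξ * z‖ := by
          exact mul_lt_mul_of_pos_right hη hApos
      _ = ‖1 - ξ * z‖ := one_mul _
  have h0 := (negBinom_hasSum ν hw).mul_left (((1 - ξ * z) ^ (ν + 1))⁻¹)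
  have hfun : (fun q => (((1 - ξ * z) ^ (ν + 1))⁻¹) * (((ν + q).choose q : ℂ) * w ^ q))
      = fun q => ((ν + q).choose q : ℂ) * ((starRingEnd ℂ) z - ξ) ^ q
        * (((1 - ξ * z) ^ (ν + q + 1))⁻¹) * η ^ q := by
    funext q
    rw [hw_def, div_pow, mul_pow]
    rw [show (1 - ξ * z) ^ (ν + q + 1) = (1 - ξ * z) ^ (ν + 1) * (1 - ξ * z) ^ q from by
      rw [← pow_add]; congr 1; omega]
    rw [mul_inv]
    field_simp
  have hFw : 1 - ξ * z - η * (starRingEnd ℂ) z + ξ * η = (1 - ξ * z) * (1 - w) := by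
    rw [hw_def]
    field_simp
    ring
  have hval : (((1 - ξ * z) ^ (ν + 1))⁻¹) * (((1 - w) ^ (ν + 1))⁻¹)
      = ((1 - ξ * z - η * (starRingEnd ℂ) z + ξ * η) ^ (ν + 1))⁻¹ := by
    rw [hFw, mul_pow, mul_inv]
  rw [hfun, hval] at h0
  exact h0

open Complex in
private lemma coeff_est {a : ℕ → ℂ} {f : ℂ → ℂ} {s M : ℝ} (hs : 0 < s)
    (hsum : ∀ x : ℂ, ‖x‖ = s → HasSum (fun j => a j * x ^ j) (f x))
    (hM : ∀ x : ℂ, ‖x‖ = s → ‖f x‖ ≤ M)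
    (habs : Summable fun j => ‖a j‖ * s ^ j) (p : ℕ) :
    ‖a p‖ * s ^ p ≤ M := by
  have hsC : ‖((s : ℝ) : ℂ)‖ = s := by rw [Complex.norm_real, Real.norm_eq_abs, abs_of_pos hs]
  refine le_of_forall_pos_le_add fun ε hε => ?_
  -- choose N with p < N and tail < ε
  obtain ⟨N, hpN, htail⟩ : ∃ N : ℕ, p < N ∧ ∑' j, ‖a (j + N)‖ * s ^ (j + N) < ε := by
    set T := ∑' j, ‖a j‖ * s ^ j with hT
    have hps := habs.hasSum.tendsto_sum_nat
    have hev1 : ∀ᶠ N in Filter.atTop, T - ε < ∑ i ∈ range N, ‖a i‖ * s ^ i :=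
      hps.eventually (eventually_gt_nhds (by linarith))
    have hev2 : ∀ᶠ N in Filter.atTop, p < N := Filter.eventually_gt_atTop p
    obtain ⟨N, h1, h2⟩ := (hev1.and hev2).exists
    refine ⟨N, h2, ?_⟩
    have hadd := Summable.sum_add_tsum_nat_add N habs
    linarith
  have hN0 : N ≠ 0 := by omega
  set ω : ℂ := Complex.exp (2 * ↑Real.pi * Complex.I / N) with hω_def
  have hprim := Complex.isPrimitiveRoot_exp N hN0
  have hω0 : ω ≠ 0 := Complex.exp_ne_zero _
  have hωabs : ‖ω‖ = 1 := by
    have h1 : ω = Complex.exp (((2 * Real.pi / N : ℝ)) * Complex.I) := by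
      rw [hω_def]; congr 1; push_cast; ring
    rw [h1, Complex.norm_exp_ofReal_mul_I]
  set ζ : ℕ → ℂ := fun j => ω ^ j / ω ^ p with hζ_def
  have hζ_pow : ∀ j, ζ j ^ N = 1 := by
    intro j
    rw [hζ_def]
    simp only [div_pow]
    rw [pow_right_comm ω j N, pow_right_comm ω p N, hprim.pow_eq_one]
    simp
  have hζ_abs : ∀ j, ‖ζ j‖ = 1 := by
    intro j
    rw [hζ_def]
    simp [norm_div, norm_pow, hωabs]
  have hζp : ζ p = 1 := div_self (pow_ne_zero p hω0)
  have hkey : ∀ j, ζ j = 1 → j ≠ p → N ≤ j := by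
    intro j h1 hne
    by_contra hlt
    push_neg at hlt
    have hωjp : ω ^ j = ω ^ p := by
      rwa [hζ_def, div_eq_one_iff_eq (pow_ne_zero p hω0)] at h1
    rcases Nat.lt_or_ge j p with hj | hj
    · have h2 : ω ^ (p - j) * ω ^ j = ω ^ p := by rw [← pow_add]; congr 1; omega
      have h3 : ω ^ (p - j) = 1 := by
        have := mul_right_cancel₀ (pow_ne_zero j hω0)
          (h2.trans (hωjp.symm.trans (one_mul (ω ^ j)).symm))
        exact this
      have h4 := (hprim.pow_eq_one_iff_dvd (p - j)).mp h3
      have := Nat.le_of_dvd (by omega) h4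
      omega
    · have hj' : p < j := by omega
      have h2 : ω ^ (j - p) * ω ^ p = ω ^ j := by rw [← pow_add]; congr 1; omega
      have h3 : ω ^ (j - p) = 1 := by
        have := mul_right_cancel₀ (pow_ne_zero p hω0)
          (h2.trans (hωjp.trans (one_mul (ω ^ p)).symm))
        exact this
      have h4 := (hprim.pow_eq_one_iff_dvd (j - p)).mp h3
      have := Nat.le_of_dvd (by omega) h4
      omega
  set E : ℕ → ℂ := fun j => ∑ k ∈ range N, ζ j ^ k with hE_def
  have hEp : E p = N := by
    rw [hE_def]
    simp [hζp]
  have hE0 : ∀ j, ζ j ≠ 1 → E j = 0 := by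
    intro j h
    rw [hE_def]
    simp only
    rw [geom_sum_eq h N, hζ_pow j, sub_self, zero_div]
  have hEbound : ∀ j, ‖E j‖ ≤ N := by
    intro j
    rw [hE_def]
    calc ‖∑ k ∈ range N, ζ j ^ k‖ ≤ ∑ k ∈ range N, ‖ζ j ^ k‖ := norm_sum_le _ _
      _ = ∑ k ∈ range N, 1 := by
          refine Finset.sum_congr rfl fun k _ => ?_
          rw [norm_pow, hζ_abs, one_pow]
      _ = N := by simp
  -- the sampled average
  set x : ℕ → ℂ := fun k => ((s : ℝ) : ℂ) * ω ^ k with hx_def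
  have hxk : ∀ k, ‖x k‖ = s := by
    intro k
    rw [hx_def]
    simp only
    rw [norm_mul, norm_pow, hωabs, one_pow, mul_one, hsC]
  set S : ℂ := (N : ℂ)⁻¹ * ∑ k ∈ range N, f (x k) * ((ω ^ p)⁻¹) ^ k with hS_def
  have hM0 : 0 ≤ M := le_trans (norm_nonneg _) (hM _ hsC)
  have hterm_le : ∀ k, ‖f (x k) * ((ω ^ p)⁻¹) ^ k‖ ≤ M := by
    intro k
    rw [norm_mul, norm_pow, norm_inv, norm_pow, hωabs]
    simpa using hM _ (hxk k)
  have hSle : ‖S‖ ≤ M := by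
    rw [hS_def, norm_mul, norm_inv, Complex.norm_natCast]
    calc (N : ℝ)⁻¹ * ‖∑ k ∈ range N, f (x k) * ((ω ^ p)⁻¹) ^ k‖
        ≤ (N : ℝ)⁻¹ * ∑ k ∈ range N, ‖f (x k) * ((ω ^ p)⁻¹) ^ k‖ :=
          mul_le_mul_of_nonneg_left (norm_sum_le _ _) (by positivity)
      _ ≤ (N : ℝ)⁻¹ * ∑ _k ∈ range N, M :=
          mul_le_mul_of_nonneg_left (Finset.sum_le_sum fun k _ => hterm_le k) (by positivity)
      _ = (N : ℝ)⁻¹ * (N * M) := by rw [Finset.sum_const, card_range]; simp [nsmul_eq_mul]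
      _ = M := by field_simp
  -- expand S as a tsum
  have hfun_eq : ∀ k, (fun j => a j * x k ^ j * ((ω ^ p)⁻¹) ^ k)
      = fun j => a j * ((s : ℝ) : ℂ) ^ j * ζ j ^ k := by
    intro k
    funext j
    rw [hx_def, hζ_def]
    simp only
    rw [mul_pow, pow_right_comm ω k j, div_pow, inv_pow, div_eq_mul_inv]
    ring
  have hterm : ∀ k, f (x k) * ((ω ^ p)⁻¹) ^ k = ∑' j, a j * ((s : ℝ) : ℂ) ^ j * ζ j ^ k := by
    intro k
    have h1 := (hsum (x k) (hxk k)).mul_right (((ω ^ p)⁻¹) ^ k)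
    rw [show (fun j => a j * x k ^ j * ((ω ^ p)⁻¹) ^ k)
        = fun j => a j * ((s : ℝ) : ℂ) ^ j * ζ j ^ k from hfun_eq k] at h1
    exact h1.tsum_eq.symm
  have hsummable_jk : ∀ k ∈ range N, Summable (fun j => a j * ((s : ℝ) : ℂ) ^ j * ζ j ^ k) := by
    intro k _
    have := ((hsum (x k) (hxk k)).summable.mul_right (((ω ^ p)⁻¹) ^ k))
    rwa [hfun_eq k] at this
  have hS_tsum : S = ∑' j, (N : ℂ)⁻¹ * (a j * ((s : ℝ) : ℂ) ^ j * E j) := by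
    rw [hS_def]
    rw [Finset.sum_congr rfl fun k _ => hterm k]
    rw [← Summable.tsum_finsetSum hsummable_jk]
    rw [← tsum_mul_left]
    refine tsum_congr fun j => ?_
    rw [hE_def]
    simp [Finset.mul_sum]
  have hNR : (N : ℝ) ≠ 0 := Nat.cast_ne_zero.mpr hN0
  have hNC : (N : ℂ) ≠ 0 := Nat.cast_ne_zero.mpr hN0
  have hup : (N : ℂ)⁻¹ * (a p * ((s : ℝ) : ℂ) ^ p * E p) = a p * ((s : ℝ) : ℂ) ^ p := by
    rw [hEp]
    field_simp
  have hu_norm_le : ∀ j, ‖(N : ℂ)⁻¹ * (a j * ((s : ℝ) : ℂ) ^ j * E j)‖ ≤ ‖a j‖ * s ^ j := by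
    intro j
    rw [norm_mul, norm_mul, norm_mul, norm_inv, Complex.norm_natCast, norm_pow, hsC]
    have h1 : (N : ℝ)⁻¹ * (‖a j‖ * s ^ j * ‖E j‖) ≤ (N : ℝ)⁻¹ * (‖a j‖ * s ^ j * N) := by
      gcongr
      exact hEbound j
    have h2 : (N : ℝ)⁻¹ * (‖a j‖ * s ^ j * N) = ‖a j‖ * s ^ j := by
      field_simp
    linarith
  have hu_sum : Summable (fun j => (N : ℂ)⁻¹ * (a j * ((s : ℝ) : ℂ) ^ j * E j)) := by
    apply Summable.of_norm
    exact Summable.of_nonneg_of_le (fun j => norm_nonneg _) hu_norm_le habs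
  have hsplit := Summable.tsum_eq_add_tsum_ite hu_sum p
  have hv_le : ∀ j, ‖(if j = p then 0 else (N : ℂ)⁻¹ * (a j * ((s : ℝ) : ℂ) ^ j * E j))‖
      ≤ (if N ≤ j then ‖a j‖ * s ^ j else 0) := by
    intro j
    by_cases h1 : j = p
    · rw [if_pos h1]
      simp only [norm_zero]
      split_ifs <;> positivity
    · rw [if_neg h1]
      by_cases h2 : N ≤ j
      · rw [if_pos h2]
        exact hu_norm_le j
      · rw [if_neg h2]
        have hζj : ζ j ≠ 1 := fun hcon => h2 (hkey j hcon h1)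
        have hEj : E j = 0 := hE0 j hζj
        simp [hEj]
  have hw_sum : Summable (fun j => if N ≤ j then ‖a j‖ * s ^ j else 0) := by
    refine Summable.of_nonneg_of_le (fun j => ?_) (fun j => ?_) habs
    · split_ifs <;> positivity
    · split_ifs with h
      · exact le_rfl
      · positivity
  have hv_sum : Summable (fun j => ‖(if j = p then 0 else (N : ℂ)⁻¹ * (a j * ((s : ℝ) : ℂ) ^ j * E j))‖) :=
    Summable.of_nonneg_of_le (fun j => norm_nonneg _) hv_le hw_sum
  have hw_tsum : (∑' j, if N ≤ j then ‖a j‖ * s ^ j else 0) = ∑' j, ‖a (j + N)‖ * s ^ (j + N) := by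
    have h1 : HasSum (fun j => if N ≤ j then ‖a j‖ * s ^ j else 0)
        ((∑' j, if N ≤ j then ‖a j‖ * s ^ j else 0) + ∑ i ∈ range N, (if N ≤ i then ‖a i‖ * s ^ i else 0)) := by
      have hz : ∑ i ∈ range N, (if N ≤ i then ‖a i‖ * s ^ i else 0) = 0 := by
        refine Finset.sum_eq_zero fun i hi => ?_
        rw [mem_range] at hi
        rw [if_neg (by omega)]
      rw [hz, add_zero]
      exact hw_sum.hasSum
    have h2 := (hasSum_nat_add_iff N).mpr h1
    have h3 : (fun j => if N ≤ j + N then ‖a (j + N)‖ * s ^ (j + N) else 0)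
        = fun j => ‖a (j + N)‖ * s ^ (j + N) := by
      funext j
      rw [if_pos (Nat.le_add_left N j)]
    rw [h3] at h2
    exact h2.tsum_eq.symm
  have hfinal : a p * ((s : ℝ) : ℂ) ^ p
      = S - ∑' j, (if j = p then 0 else (N : ℂ)⁻¹ * (a j * ((s : ℝ) : ℂ) ^ j * E j)) := by
    rw [hS_tsum, hsplit, hup]
    ring
  calc ‖a p‖ * s ^ p = ‖a p * ((s : ℝ) : ℂ) ^ p‖ := by rw [norm_mul, norm_pow, hsC]
    _ = ‖S - ∑' j, (if j = p then 0 else (N : ℂ)⁻¹ * (a j * ((s : ℝ) : ℂ) ^ j * E j))‖ := by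
        rw [hfinal]
    _ ≤ ‖S‖ + ‖∑' j, (if j = p then 0 else (N : ℂ)⁻¹ * (a j * ((s : ℝ) : ℂ) ^ j * E j))‖ :=
        norm_sub_le _ _
    _ ≤ M + ε := by
        refine add_le_add hSle ?_
        calc ‖∑' j, (if j = p then 0 else (N : ℂ)⁻¹ * (a j * ((s : ℝ) : ℂ) ^ j * E j))‖
            ≤ ∑' j, ‖(if j = p then 0 else (N : ℂ)⁻¹ * (a j * ((s : ℝ) : ℂ) ^ j * E j))‖ :=
              norm_tsum_le_tsum_norm hv_sum
          _ ≤ ∑' j, (if N ≤ j then ‖a j‖ * s ^ j else 0) := Summable.tsum_le_tsum hv_le hv_sum hw_sum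
          _ = ∑' j, ‖a (j + N)‖ * s ^ (j + N) := hw_tsum
          _ ≤ ε := htail.le

open Complex in
private lemma Rp_zero (ν p q : ℕ) :
    Rp ν p q 0 = if p = q then ((-1 : ℂ)) ^ p * ((ν + p).choose p : ℂ) else 0 := by
  rw [Rp]
  rcases eq_or_ne p q with rfl | hne
  · rw [if_pos rfl]
    rw [Finset.sum_eq_single p]
    · rw [if_pos le_rfl]
      simp [Nat.sub_self]
      ring
    · intro i hi hip
      rw [mem_range] at hi
      rw [if_pos (by omega : i ≤ p)]
      rw [zero_pow (by omega : p - i ≠ 0)]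
      ring
    · intro h
      exact absurd (self_mem_range_succ p) h
  · rw [if_neg hne]
    apply mul_eq_zero_of_right
    apply Finset.sum_eq_zero
    intro i hi
    rw [mem_range] at hi
    split_ifs with h
    · rcases Nat.lt_or_ge i q with hiq | hiq
      · rw [map_zero, zero_pow (by omega : q - i ≠ 0)]
        ring
      · have hiq' : i = q := by omega
        rw [zero_pow (by omega : p - i ≠ 0)]
        ring
    · rfl

private lemma nat_prod_identity (ν p : ℕ) :
    p.factorial * ((ν + p).choose p) = ∏ j ∈ range p, (ν + 1 + j) := by
  have h1 : (ν + p).descFactorial p = p.factorial * ((ν + p).choose p) :=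
    Nat.descFactorial_eq_factorial_mul_choose _ _
  rw [← h1, Nat.descFactorial_eq_prod_range]
  conv_rhs => rw [← Finset.prod_range_reflect]
  refine Finset.prod_congr rfl fun i hi => ?_
  rw [mem_range] at hi
  omega

open Complex in
private lemma main_hasSum (ν : ℕ) {z ξ η : ℂ} (hz : ‖z‖ ≤ 1) (hξ : ‖ξ‖ < 1) (hη : ‖η‖ < 1) :
    HasSum (fun pq : ℕ × ℕ => Rp ν pq.1 pq.2 z * ξ ^ pq.1 * η ^ pq.2)
      (((1 - ξ * z - η * (starRingEnd ℂ) z + ξ * η) ^ (ν + 1))⁻¹) := by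
  obtain ⟨s, hs0, hξs, hs1⟩ : ∃ s : ℝ, 0 < s ∧ ‖ξ‖ < s ∧ s < 1 :=
    ⟨(1 + ‖ξ‖) / 2, by positivity, by linarith [norm_nonneg ξ], by linarith⟩
  have hsC : ‖((s : ℝ) : ℂ)‖ = s := by
    rw [Complex.norm_real, Real.norm_eq_abs, abs_of_pos hs0]
  have hAx : ∀ x : ℂ, ‖x‖ = s → 1 - s ≤ ‖1 - x * z‖ := by
    intro x hx
    have h1 : ‖x * z‖ ≤ s := by
      rw [norm_mul, hx]
      calc s * ‖z‖ ≤ s * 1 := by gcongr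
        _ = s := mul_one _
    calc 1 - s ≤ 1 - ‖x * z‖ := by linarith
      _ = ‖(1 : ℂ)‖ - ‖x * z‖ := by rw [norm_one]
      _ ≤ ‖1 - x * z‖ := norm_sub_norm_le _ _
  have hBbound : ∀ q : ℕ, ∀ x : ℂ, ‖x‖ = s →
      ‖((ν + q).choose q : ℂ) * ((starRingEnd ℂ) z - x) ^ q
        * (((1 - x * z) ^ (ν + q + 1))⁻¹)‖
      ≤ ((ν + q).choose q : ℝ) * ((1 - s) ^ (ν + 1))⁻¹ := by
    intro q x hx
    have hx1 : ‖x‖ < 1 := by rw [hx]; exact hs1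
    have hA := hAx x hx
    have hApos : 0 < ‖1 - x * z‖ := by linarith
    rw [norm_mul, norm_mul, Complex.norm_natCast, norm_pow, norm_inv, norm_pow]
    have hm := mobius hz hx1
    calc ((ν + q).choose q : ℝ) * ‖(starRingEnd ℂ) z - x‖ ^ q * (‖1 - x * z‖ ^ (ν + q + 1))⁻¹
        ≤ ((ν + q).choose q : ℝ) * ‖1 - x * z‖ ^ q * (‖1 - x * z‖ ^ (ν + q + 1))⁻¹ := by
          gcongr
      _ = ((ν + q).choose q : ℝ) * (‖1 - x * z‖ ^ (ν + 1))⁻¹ := by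
          rw [show ν + q + 1 = (ν + 1) + q from by omega, pow_add, mul_inv]
          have hq0 : (‖1 - x * z‖ ^ q) ≠ 0 := by positivity
          calc ((ν + q).choose q : ℝ) * ‖1 - x * z‖ ^ q
                * ((‖1 - x * z‖ ^ (ν + 1))⁻¹ * (‖1 - x * z‖ ^ q)⁻¹)
              = ((ν + q).choose q : ℝ) * (‖1 - x * z‖ ^ (ν + 1))⁻¹
                * (‖1 - x * z‖ ^ q * (‖1 - x * z‖ ^ q)⁻¹) := by ring
            _ = ((ν + q).choose q : ℝ) * (‖1 - x * z‖ ^ (ν + 1))⁻¹ := by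
                rw [mul_inv_cancel₀ hq0, mul_one]
      _ ≤ ((ν + q).choose q : ℝ) * ((1 - s) ^ (ν + 1))⁻¹ := by
          have h3 : ((1 - s) ^ (ν + 1)) ≤ ‖1 - x * z‖ ^ (ν + 1) :=
            pow_le_pow_left₀ (by linarith) hA _
          have h4 : (‖1 - x * z‖ ^ (ν + 1))⁻¹ ≤ ((1 - s) ^ (ν + 1))⁻¹ := by
            have h0 : (0 : ℝ) < (1 - s) ^ (ν + 1) := by
              have : (0 : ℝ) < 1 - s := by linarith
              positivity
            gcongr
          exact mul_le_mul_of_nonneg_left h4 (Nat.cast_nonneg _)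
  have habs_q : ∀ q : ℕ, Summable fun p => ‖Rp ν p q z‖ * s ^ p := by
    intro q
    have h1 := (hasSum_Rp ν q hz (ξ := ((s : ℝ) : ℂ)) (by rw [hsC]; exact hs1)).summable
    have h2 := summable_norm_iff.mpr h1
    refine h2.congr fun p => ?_
    rw [norm_mul, norm_pow, hsC]
  have hcoef : ∀ q p : ℕ, ‖Rp ν p q z‖ * s ^ p
      ≤ ((ν + q).choose q : ℝ) * ((1 - s) ^ (ν + 1))⁻¹ := by
    intro q p
    exact coeff_est hs0
      (fun x hx => hasSum_Rp ν q hz (by rw [hx]; exact hs1))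
      (hBbound q) (habs_q q) p
  have hgeo : Summable (fun p : ℕ => (‖ξ‖ / s) ^ p * ((1 - s) ^ (ν + 1))⁻¹) := by
    refine Summable.mul_right _ ?_
    exact summable_geometric_of_lt_one (by positivity) (by rw [div_lt_one hs0]; exact hξs)
  have hvq : Summable (fun q : ℕ => ((ν + q).choose q : ℝ) * ‖η‖ ^ q) := by
    have hw : ‖((‖η‖ : ℝ) : ℂ)‖ < 1 := by
      rw [Complex.norm_real, Real.norm_eq_abs, _root_.abs_of_nonneg (norm_nonneg η)]
      exact hη
    have h1 := (negBinom_hasSum ν hw).summable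
    have h2 := summable_norm_iff.mpr h1
    refine h2.congr fun q => ?_
    rw [norm_mul, Complex.norm_natCast, norm_pow, Complex.norm_real, Real.norm_eq_abs,
      _root_.abs_of_nonneg (norm_nonneg η)]
  have h1s : (0 : ℝ) ≤ 1 - s := by linarith
  have hprod_sum : Summable (fun pq : ℕ × ℕ =>
      ((‖ξ‖ / s) ^ pq.1 * ((1 - s) ^ (ν + 1))⁻¹)
        * (((ν + pq.2).choose pq.2 : ℝ) * ‖η‖ ^ pq.2)) := by
    refine hgeo.mul_of_nonneg hvq (fun p => ?_) (fun q => ?_)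
    · exact mul_nonneg (pow_nonneg (div_nonneg (norm_nonneg _) hs0.le) _)
        (inv_nonneg.mpr (pow_nonneg h1s _))
    · exact mul_nonneg (Nat.cast_nonneg _) (pow_nonneg (norm_nonneg _) _)
  have hnorm_sum : Summable (fun pq : ℕ × ℕ =>
      ‖Rp ν pq.1 pq.2 z * ξ ^ pq.1 * η ^ pq.2‖) := by
    refine Summable.of_nonneg_of_le (fun pq => norm_nonneg _) (fun pq => ?_) hprod_sum
    obtain ⟨p, q⟩ := pq
    rw [norm_mul, norm_mul, norm_pow, norm_pow]
    calc ‖Rp ν p q z‖ * ‖ξ‖ ^ p * ‖η‖ ^ q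
        = (‖Rp ν p q z‖ * s ^ p) * ((‖ξ‖ / s) ^ p * ‖η‖ ^ q) := by
          rw [div_pow]
          field_simp
      _ ≤ (((ν + q).choose q : ℝ) * ((1 - s) ^ (ν + 1))⁻¹) * ((‖ξ‖ / s) ^ p * ‖η‖ ^ q) :=
          mul_le_mul_of_nonneg_right (hcoef q p)
            (mul_nonneg (pow_nonneg (div_nonneg (norm_nonneg _) hs0.le) _)
              (pow_nonneg (norm_nonneg _) _))
      _ = ((‖ξ‖ / s) ^ p * ((1 - s) ^ (ν + 1))⁻¹)
            * (((ν + q).choose q : ℝ) * ‖η‖ ^ q) := by ring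
  have hsum_f : Summable (fun pq : ℕ × ℕ => Rp ν pq.1 pq.2 z * ξ ^ pq.1 * η ^ pq.2) :=
    summable_norm_iff.mp hnorm_sum
  have H := hsum_f.hasSum
  have hswap := (Equiv.prodComm ℕ ℕ).hasSum_iff
    (f := fun pq : ℕ × ℕ => Rp ν pq.1 pq.2 z * ξ ^ pq.1 * η ^ pq.2) |>.mpr H
  have hfiber : ∀ q : ℕ, HasSum (fun p => Rp ν p q z * ξ ^ p * η ^ q)
      (((ν + q).choose q : ℂ) * ((starRingEnd ℂ) z - ξ) ^ q
        * (((1 - ξ * z) ^ (ν + q + 1))⁻¹) * η ^ q) :=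
    fun q => (hasSum_Rp ν q hz hξ).mul_right _
  have happ := hswap.prod_fiberwise hfiber
  have heta := hasSum_eta ν hz hξ hη
  have hSG := happ.unique heta
  rw [← hSG]
  exact H

theorem stmt17 (n : ℕ) (hn : 2 ≤ n) :
    ∃ R : ℕ → ℕ → ℂ → ℂ,
      (∀ z ξ η : ℂ, ‖z‖ ≤ 1 → ‖ξ‖ < 1 → ‖η‖ < 1 →
        HasSum (fun pq : ℕ × ℕ => R pq.1 pq.2 z * ξ ^ pq.1 * η ^ pq.2)
          ((1 - ξ * z - η * (starRingEnd ℂ) z + ξ * η) ^ ((1 : ℤ) - n)))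
      ∧ ∀ p q : ℕ,
          (p.factorial : ℂ) * q.factorial * R p q 0
            = (-1 : ℂ) ^ p * (if p = q then 1 else 0) * p.factorial *
                ∏ j ∈ range p, ((n : ℂ) - 1 + j) := by
  refine ⟨Rp (n - 2), ?_, ?_⟩
  · intro z ξ η hzabs hξabs hηabs
    have hz : ‖z‖ ≤ 1 := hzabs
    have hξ : ‖ξ‖ < 1 := hξabs
    have hη : ‖η‖ < 1 := hηabs
    have hexp : (1 - ξ * z - η * (starRingEnd ℂ) z + ξ * η) ^ ((1 : ℤ) - n)
        = ((1 - ξ * z - η * (starRingEnd ℂ) z + ξ * η) ^ ((n - 2) + 1))⁻¹ := by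
      have h1 : (1 : ℤ) - n = -(((n - 2) + 1 : ℕ) : ℤ) := by
        push_cast [Nat.cast_sub hn]
        omega
      rw [h1, zpow_neg, zpow_natCast]
    rw [hexp]
    exact main_hasSum (n - 2) hz hξ hη
  · intro p q
    rw [Rp_zero]
    rcases eq_or_ne p q with rfl | hne
    · rw [if_pos rfl, if_pos rfl]
      have hcast : ∏ j ∈ range p, ((n : ℂ) - 1 + j)
          = ((∏ j ∈ range p, (n - 2 + 1 + j) : ℕ) : ℂ) := by
        rw [Nat.cast_prod]
        refine Finset.prod_congr rfl fun j _ => ?_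
        rw [Nat.cast_add, Nat.cast_add, Nat.cast_sub hn]
        push_cast
        ring
      rw [hcast, ← nat_prod_identity (n - 2) p]
      push_cast
      ring
    · rw [if_neg hne, if_neg hne]
      ring
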